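/- The greedy schedule that repeatedly updates all blocks corresponding to current sink vertices of the dependency graph and then deletes those sinks terminates and produces a feasible update sequence whenever the dependency graph is acyclic. -/

import Mathlib

/-!
A formal model of congestion-free flow rerouting (network update scheduling).
An update flow network consists of a source `s`, a terminal `t`, edge
capacities, and `k` update flow pairs, each given by an old `s`-`t` path and
an update (new) `s`-`t` path (represented as lists of vertices) with a demand.
An update sequence assigns to every update `(v, i)` (vertex `v`, pair `i`) a
round; it is feasible if resolving all updates of earlier rounds together with
any subset of the current round always leaves, for every pair, a unique valid
(capacity-respecting) transient `s`-`t` path among the active edges, and the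
family of transient paths jointly respects the capacities.
-/

namespace FlowUpdate

variable {V : Type} [DecidableEq V] {k : ℕ}

/-- The edges of a path given as a list of vertices. -/
def edgesOf (p : List V) : List (V × V) := p.zip p.tail

/-- The subpath of `p` from vertex `a` to vertex `z` (inclusive). -/
def segment (p : List V) (a z : V) : List V :=
  ((p.dropWhile (fun v => decide (v ≠ a))).takeWhile (fun v => decide (v ≠ z))) ++ [z]

/-- The outgoing edge of `v` on the path `p`, if any. -/
def outEdge (p : List V) (v : V) : Option (V × V) :=
  (edgesOf p).find? (fun e => decide (e.1 = v))

/-- An update flow network with `k` update flow pairs. -/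
structure UFN (V : Type) (k : ℕ) where
  s : V
  t : V
  cap : V → V → ℕ
  old : Fin k → List V
  new : Fin k → List V
  demand : Fin k → ℕ

namespace UFN

/-- After resolving the set of updates `U`, edge `e` is active for pair `i` iff
it is an old edge whose tail is not yet updated, or a new edge whose tail is
updated. -/
def active (G : UFN V k) (U : Set (V × Fin k)) (i : Fin k) (e : V × V) : Prop :=
  (e ∈ edgesOf (G.old i) ∧ (e.1, i) ∉ U) ∨ (e ∈ edgesOf (G.new i) ∧ (e.1, i) ∈ U)

/-- `p` is a simple `s`-`t` path all of whose edges satisfy `E`. -/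
def IsPathIn (E : V × V → Prop) (s t : V) (p : List V) : Prop :=
  p.head? = some s ∧ p.getLast? = some t ∧ List.Chain' (fun u v => E (u, v)) p ∧ p.Nodup

/-- `p` respects the capacities for the demand of pair `i`. -/
def ValidPath (G : UFN V k) (i : Fin k) (p : List V) : Prop :=
  ∀ e ∈ edgesOf p, G.demand i ≤ G.cap e.1 e.2

/-- `T` is the unique valid transient path of pair `i` after resolving `U`. -/
def TransientPair (G : UFN V k) (U : Set (V × Fin k)) (i : Fin k) (T : List V) : Prop :=
  IsPathIn (G.active U i) G.s G.t T ∧ G.ValidPath i T ∧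
    ∀ p, IsPathIn (G.active U i) G.s G.t p → G.ValidPath i p → p = T

/-- After resolving `U`, every pair has a unique valid transient path, and the
family of transient paths jointly respects the capacities. -/
def TransientFamily (G : UFN V k) (U : Set (V × Fin k)) : Prop :=
  ∃ T : Fin k → List V,
    (∀ i, G.TransientPair U i (T i)) ∧
    (∀ u v : V, (∑ i : Fin k, if (u, v) ∈ edgesOf (T i) then G.demand i else 0) ≤ G.cap u v)

/-- An update sequence (an assignment of rounds to all updates) is feasible if
after resolving all updates of rounds `< r` together with any subset of the
updates of round `r`, all pairs admit a transient family. -/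
def Feasible (G : UFN V k) (R : V × Fin k → ℕ) : Prop :=
  ∀ r : ℕ, ∀ S : Set (V × Fin k), (∀ u ∈ S, R u = r) →
    G.TransientFamily ({u | R u < r} ∪ S)

/-- `p` is a simple path from the source to the terminal. -/
def IsStPath (G : UFN V k) (p : List V) : Prop :=
  p.head? = some G.s ∧ p.getLast? = some G.t ∧ p.Nodup

/-- Well-formedness of an update flow network: all old and new flows are simple
`s`-`t` paths, each pair forms a DAG, each new path respects capacities for its
own demand, and both the old family and the new family jointly respect the
capacities. -/
def WellFormed (G : UFN V k) : Prop :=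
  (∀ i, G.IsStPath (G.old i) ∧ G.IsStPath (G.new i)) ∧
  (∀ i, ∃ ord : V → ℕ, ∀ e ∈ edgesOf (G.old i) ++ edgesOf (G.new i), ord e.1 < ord e.2) ∧
  (∀ i, G.ValidPath i (G.new i)) ∧
  (∀ u v : V, (∑ i : Fin k, if (u, v) ∈ edgesOf (G.old i) then G.demand i else 0) ≤ G.cap u v) ∧
  (∀ u v : V, (∑ i : Fin k, if (u, v) ∈ edgesOf (G.new i) then G.demand i else 0) ≤ G.cap u v)

/-- The common vertices of the old and new path of pair `i`, in path order. -/
def commons (G : UFN V k) (i : Fin k) : List V :=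
  (G.old i).filter (fun v => decide (v ∈ G.new i))

/-- A block of pair `i` is a pair `(a, z)` of consecutive common vertices of the
old and new paths of `i`. -/
def IsBlock (G : UFN V k) (i : Fin k) (b : V × V) : Prop :=
  b ∈ edgesOf (G.commons i)

/-- A (candidate) block: a pair index together with its start and end vertices. -/
abbrev Blk (V : Type) (k : ℕ) := Fin k × V × V

def IsBlk (G : UFN V k) (b : Blk V k) : Prop := G.IsBlock b.1 b.2

/-- The old-path segment of a block. -/
def blkOldSeg (G : UFN V k) (b : Blk V k) : List V := segment (G.old b.1) b.2.1 b.2.2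

/-- The update-path segment of a block. -/
def blkNewSeg (G : UFN V k) (b : Blk V k) : List V := segment (G.new b.1) b.2.1 b.2.2

/-- Block `b1` depends on block `b2` (written `b1 → b2`) if they belong to
different pairs and some edge lies on `b1`'s update path and on `b2`'s old path
with capacity less than the sum of the two demands. -/
def Dep (G : UFN V k) (b1 b2 : Blk V k) : Prop :=
  G.IsBlk b1 ∧ G.IsBlk b2 ∧ b1.1 ≠ b2.1 ∧
  ∃ e : V × V, e ∈ edgesOf (G.blkNewSeg b1) ∧ e ∈ edgesOf (G.blkOldSeg b2) ∧
    G.cap e.1 e.2 < G.demand b1.1 + G.demand b2.1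

/-- The dependency graph contains a directed cycle. -/
def HasDepCycle (G : UFN V k) : Prop := ∃ b : Blk V k, Relation.TransGen G.Dep b b

/-- The number of rounds used by an update sequence. -/
def numRounds [Fintype V] (R : V × Fin k → ℕ) : ℕ :=
  (Finset.image R Finset.univ).card

/-- An update `(v, i)` is empty if `v`'s outgoing old edge and outgoing new edge
for pair `i` coincide (in particular if `v` has no outgoing edge for pair `i`). -/
def EmptyUpd (G : UFN V k) (u : V × Fin k) : Prop :=
  outEdge (G.old u.2) u.1 = outEdge (G.new u.2) u.1

instance (G : UFN V k) (u : V × Fin k) : Decidable (G.EmptyUpd u) :=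
  inferInstanceAs (Decidable (outEdge (G.old u.2) u.1 = outEdge (G.new u.2) u.1))

/-- `R` updates every block in (at most) 3 consecutive rounds: first all internal
update-path vertices of the block, then the start vertex, then all old-path-only
vertices of the block. -/
def BlockPattern (G : UFN V k) (R : V × Fin k → ℕ) : Prop :=
  ∀ b : Blk V k, G.IsBlk b → ∃ r : ℕ,
    (∀ v ∈ G.blkNewSeg b, v ≠ b.2.1 → v ≠ b.2.2 → R (v, b.1) = r) ∧
    R (b.2.1, b.1) = r + 1 ∧
    (∀ v ∈ G.blkOldSeg b, v ∉ G.new b.1 → R (v, b.1) = r + 2)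

/-- The size of the network (total length of the flow paths). -/
def size (G : UFN V k) : ℕ := ∑ i : Fin k, ((G.old i).length + (G.new i).length)

end UFN

section Aux
set_option linter.unusedSectionVars false
open List

/-! ### Generic list lemmas -/

theorem aux_mem_edgesOf_iff {p : List V} {u v : V} :
    (u, v) ∈ edgesOf p ↔ ∃ l1 l2, p = l1 ++ u :: v :: l2 := by
  induction p with
  | nil =>
    constructor
    · intro h; simp [edgesOf] at h
    · rintro ⟨l1, l2, h⟩; exact absurd (congrArg List.length h) (by simp)
  | cons a q ih =>
    cases q with
    | nil =>
      constructor
      · intro h; simp [edgesOf] at h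
      · rintro ⟨l1, l2, h⟩; exact absurd (congrArg List.length h) (by simp; omega)
    | cons b r =>
      constructor
      · intro h
        rcases List.mem_cons.1 h with h | h
        · obtain ⟨rfl, rfl⟩ := Prod.mk.injEq .. ▸ h
          exact ⟨[], r, by simp_all⟩
        · rcases ih.1 h with ⟨l1, l2, hq⟩
          exact ⟨a :: l1, l2, by rw [List.cons_append, ← hq]⟩
      · rintro ⟨l1, l2, hl⟩
        cases l1 with
        | nil =>
          injection hl with h1 h2
          injection h2 with h2 h3
          subst h1; subst h2
          exact List.mem_cons_self
        | cons x l1' =>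
          injection hl with h1 h2
          exact List.mem_cons.2 (Or.inr (ih.2 ⟨l1', l2, h2⟩))

theorem aux_fst_mem {p : List V} {u v : V} (h : (u, v) ∈ edgesOf p) : u ∈ p := by
  rcases aux_mem_edgesOf_iff.1 h with ⟨l1, l2, rfl⟩; simp

theorem aux_snd_mem {p : List V} {u v : V} (h : (u, v) ∈ edgesOf p) : v ∈ p := by
  rcases aux_mem_edgesOf_iff.1 h with ⟨l1, l2, rfl⟩; simp

theorem aux_edgesOf_cons_cons (a b : V) (l : List V) :
    edgesOf (a :: b :: l) = (a, b) :: edgesOf (b :: l) := rfl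

theorem aux_edgesOf_append_cons (l : List V) (c : V) (m : List V) :
    edgesOf (l ++ c :: m) = edgesOf (l ++ [c]) ++ edgesOf (c :: m) := by
  induction l with
  | nil => simp [edgesOf]
  | cons a l ih =>
    cases l with
    | nil => cases m <;> simp [edgesOf]
    | cons b l' =>
      simp only [List.cons_append, aux_edgesOf_cons_cons]
      simp only [← List.cons_append, ih]

theorem aux_edges_infix {p q : List V} (h : p <:+: q) {e : V × V} (he : e ∈ edgesOf p) :
    e ∈ edgesOf q := by
  obtain ⟨u, v⟩ := e
  rcases aux_mem_edgesOf_iff.1 he with ⟨l1, l2, rfl⟩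
  rcases h with ⟨s, t, rfl⟩
  exact aux_mem_edgesOf_iff.2 ⟨s ++ l1, l2 ++ t, by simp⟩

theorem aux_succ_unique {p : List V} (hp : p.Nodup) {u v w : V}
    (h1 : (u, v) ∈ edgesOf p) (h2 : (u, w) ∈ edgesOf p) : v = w := by
  induction p with
  | nil => simp [edgesOf] at h1
  | cons a q ih =>
    cases q with
    | nil => simp [edgesOf] at h1
    | cons b r =>
      rw [aux_edgesOf_cons_cons] at h1 h2
      rcases List.mem_cons.1 h1 with h1' | h1' <;> rcases List.mem_cons.1 h2 with h2' | h2'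
      · obtain ⟨_, rfl⟩ := Prod.mk.injEq .. ▸ h1'
        obtain ⟨_, rfl⟩ := Prod.mk.injEq .. ▸ h2'
        rfl
      · obtain ⟨rfl, rfl⟩ := Prod.mk.injEq .. ▸ h1'
        exact absurd (aux_fst_mem h2') (by simpa using (List.nodup_cons.1 hp).1)
      · obtain ⟨rfl, rfl⟩ := Prod.mk.injEq .. ▸ h2'
        exact absurd (aux_fst_mem h1') (by simpa using (List.nodup_cons.1 hp).1)
      · exact ih (List.nodup_cons.1 hp).2 h1' h2'

theorem aux_chain'_edges (p : List V) : List.Chain' (fun u v => (u, v) ∈ edgesOf p) p := by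
  have : ∀ q : List V, q <:+ p → List.Chain' (fun u v => (u, v) ∈ edgesOf p) q := by
    intro q hq
    induction q with
    | nil => exact List.isChain_nil
    | cons a q ih =>
      cases q with
      | nil => exact List.isChain_singleton _
      | cons b r =>
        refine List.isChain_cons_cons.2 ⟨?_, ih (List.IsSuffix.trans (by exact ⟨[a], rfl⟩) hq)⟩
        rcases hq with ⟨s, rfl⟩
        exact aux_mem_edgesOf_iff.2 ⟨s, r, rfl⟩
  exact this p (List.suffix_refl p)

theorem aux_split_first {l : List V} {a : V} (h : a ∈ l) :
    ∃ l1 l2, l = l1 ++ a :: l2 ∧ a ∉ l1 := by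
  induction l with
  | nil => simp at h
  | cons x l ih =>
    by_cases hx : a = x
    · subst hx; exact ⟨[], l, rfl, by simp⟩
    · rcases ih ((List.mem_cons.1 h).resolve_left hx) with ⟨l1, l2, rfl, hna⟩
      refine ⟨x :: l1, l2, rfl, fun hm => ?_⟩
      rcases List.mem_cons.1 hm with h | h
      exacts [hx h, hna h]

theorem aux_dropWhile_append_of_all {P : V → Bool} {l1 l2 : List V} (h : ∀ x ∈ l1, P x = true) :
    (l1 ++ l2).dropWhile P = l2.dropWhile P := by
  induction l1 with
  | nil => rfl
  | cons a l ih =>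
    simp only [List.cons_append, List.dropWhile_cons, h a (by simp)]
    exact ih fun x hx => h x (by simp [hx])

theorem aux_takeWhile_append_of_all {P : V → Bool} {l1 l2 : List V} {z : V}
    (h : ∀ x ∈ l1, P x = true) (hz : P z = false) :
    (l1 ++ z :: l2).takeWhile P = l1 := by
  induction l1 with
  | nil => simp [List.takeWhile_cons, hz]
  | cons a l ih =>
    simp only [List.cons_append, List.takeWhile_cons, h a (by simp)]
    simp only [if_true, ih fun x hx => h x (by simp [hx])]

theorem aux_segment_eq {p₁ I p₂ : List V} {a z : V} (h1 : a ∉ p₁) (h2 : z ∉ a :: I) :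
    segment (p₁ ++ a :: (I ++ z :: p₂)) a z = a :: (I ++ [z]) := by
  unfold segment
  rw [aux_dropWhile_append_of_all (fun x hx => by simp; rintro rfl; exact h1 hx)]
  have hd : List.dropWhile (fun v => decide (v ≠ a)) (a :: (I ++ z :: p₂))
      = (a :: I) ++ z :: p₂ := by
    rw [List.dropWhile_cons]; simp
  rw [hd, aux_takeWhile_append_of_all (fun x hx => by simp; rintro rfl; exact h2 hx)
    (by simp)]
  simp

theorem aux_path_unique {E : V × V → Prop} (hfun : ∀ u v w, E (u, v) → E (u, w) → v = w) :
    ∀ (p q : List V) (s t : V), p.head? = some s → q.head? = some s →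
      List.Chain' (fun u v => E (u, v)) p → List.Chain' (fun u v => E (u, v)) q →
      p.getLast? = some t → q.getLast? = some t → p.Nodup → q.Nodup → p = q := by
  intro p
  induction p with
  | nil => intro q s t h; simp at h
  | cons a p' ih =>
    intro q s t hp hq hcp hcq hlp hlq hnp hnq
    obtain ⟨b, q', rfl⟩ : ∃ b q'', q = b :: q'' := by
      cases q with
      | nil => simp at hq
      | cons b q'' => exact ⟨b, q'', rfl⟩
    obtain rfl : a = b := by
      have h1 : a = s := by simpa using hp
      have h2 : b = s := by simpa using hq
      rw [h1, h2]
    cases p' with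
    | nil =>
      obtain rfl : t = a := by have := hlp; simp at this; exact this.symm
      cases q' with
      | nil => rfl
      | cons c q'' =>
        exfalso
        have hmem : t ∈ c :: q'' := by
          have : (c :: q'').getLast? = some t := by
            rw [← hlq]; symm; exact List.getLast?_cons_cons ..
          exact List.mem_of_mem_getLast? this
        exact (List.nodup_cons.1 hnq).1 hmem
    | cons c p'' =>
      cases q' with
      | nil =>
        exfalso
        obtain rfl : t = a := by have := hlq; simp at this; exact this.symm
        have hmem : t ∈ c :: p'' := by
          have : (c :: p'').getLast? = some t := by
            rw [← hlp]; symm; exact List.getLast?_cons_cons ..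
          exact List.mem_of_mem_getLast? this
        exact (List.nodup_cons.1 hnp).1 hmem
      | cons d q'' =>
        have hEc : E (a, c) := (List.isChain_cons_cons.1 hcp).1
        have hEd : E (a, d) := (List.isChain_cons_cons.1 hcq).1
        obtain rfl : c = d := hfun a c d hEc hEd
        have := ih (c :: q'') c t (by simp) (by simp)
          (List.isChain_cons_cons.1 hcp).2 (List.isChain_cons_cons.1 hcq).2
          (by rw [← hlp]; exact (List.getLast?_cons_cons ..).symm)
          (by rw [← hlq]; exact (List.getLast?_cons_cons ..).symm)
          (List.nodup_cons.1 hnp).2 (List.nodup_cons.1 hnq).2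
        rw [this]

theorem aux_chain'_ord_pairwise {ord : V → ℕ} {l : List V}
    (h : List.Chain' (fun u v => ord u < ord v) l) :
    List.Pairwise (fun u v => ord u < ord v) l := by
  haveI : IsTrans V (fun u v => ord u < ord v) := ⟨fun a b c => Nat.lt_trans⟩
  exact List.isChain_iff_pairwise.1 h

theorem aux_nodup_of_pairwise_ord {ord : V → ℕ} {l : List V}
    (h : List.Pairwise (fun u v => ord u < ord v) l) : l.Nodup :=
  h.imp fun hlt => by rintro rfl; omega

theorem aux_pairwise_tricho {r : V → V → Prop} {l : List V} (h : List.Pairwise r l)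
    {a a' : V} (ha : a ∈ l) (ha' : a' ∈ l) (hne : a ≠ a') : r a a' ∨ r a' a := by
  induction l with
  | nil => simp at ha
  | cons x l ih =>
    rcases List.mem_cons.1 ha with h1 | h1 <;> rcases List.mem_cons.1 ha' with h2 | h2
    · exact absurd (h1.trans h2.symm) hne
    · subst h1; exact Or.inl ((List.pairwise_cons.1 h).1 _ h2)
    · subst h2; exact Or.inr ((List.pairwise_cons.1 h).1 _ h1)
    · exact ih (List.pairwise_cons.1 h).2 h1 h2

end Aux
section Aux2
set_option linter.unusedSectionVars false
open List UFN

variable (G : UFN V 2)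

/-! ### The topological rank on blocks -/

noncomputable def rho (b : Blk V 2) : ℕ :=
  Set.ncard {b' | Relation.TransGen G.Dep b b'}

theorem isBlk_of_transGen {b b' : Blk V 2} (h : Relation.TransGen G.Dep b b') :
    G.IsBlk b' := by
  induction h with
  | single h => exact h.2.1
  | tail _ h _ => exact h.2.1

theorem blkSet_finite : {b : Blk V 2 | G.IsBlk b}.Finite := by
  have : {b : Blk V 2 | G.IsBlk b} ⊆
      ⋃ i : Fin 2, (fun e => (i, e)) '' {e | e ∈ edgesOf (G.commons i)} := by
    rintro ⟨i, e⟩ hb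
    exact Set.mem_iUnion.2 ⟨i, ⟨e, hb, rfl⟩⟩
  exact Set.Finite.subset (Set.finite_iUnion fun i =>
    ((edgesOf (G.commons i)).finite_toSet).image _) this

theorem rho_lt (hacyc : ¬ G.HasDepCycle) {b1 b2 : Blk V 2} (h : G.Dep b1 b2) :
    rho G b2 < rho G b1 := by
  have hfin : {b' | Relation.TransGen G.Dep b1 b'}.Finite :=
    (blkSet_finite G).subset fun b' hb' => isBlk_of_transGen G hb'
  refine Set.ncard_lt_ncard ?_ hfin
  constructor
  · intro x hx
    exact Relation.TransGen.head h hx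
  · intro hsub
    have hb2 : b2 ∈ {b' | Relation.TransGen G.Dep b1 b'} := Relation.TransGen.single h
    have : Relation.TransGen G.Dep b2 b2 := hsub hb2
    exact hacyc ⟨b2, this⟩

end Aux2
section Aux3
set_option linter.unusedSectionVars false
open List UFN

variable (G : UFN V 2) (hWF : G.WellFormed)
include hWF

/-- A vertex order witnessing the DAG property for pair `i`. -/
noncomputable def ordF (i : Fin 2) : V → ℕ := (hWF.2.1 i).choose

theorem ordF_spec (i : Fin 2) :
    ∀ e ∈ edgesOf (G.old i) ++ edgesOf (G.new i), ordF G hWF i e.1 < ordF G hWF i e.2 :=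
  (hWF.2.1 i).choose_spec

theorem pairwise_old (i : Fin 2) :
    List.Pairwise (fun u v => ordF G hWF i u < ordF G hWF i v) (G.old i) :=
  aux_chain'_ord_pairwise <| (aux_chain'_edges (G.old i)).imp
    fun a b h => ordF_spec G hWF i (a, b) (List.mem_append.2 (Or.inl h))

theorem pairwise_new (i : Fin 2) :
    List.Pairwise (fun u v => ordF G hWF i u < ordF G hWF i v) (G.new i) :=
  aux_chain'_ord_pairwise <| (aux_chain'_edges (G.new i)).imp
    fun a b h => ordF_spec G hWF i (a, b) (List.mem_append.2 (Or.inr h))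

theorem pairwise_commons (i : Fin 2) :
    List.Pairwise (fun u v => ordF G hWF i u < ordF G hWF i v) (G.commons i) :=
  (pairwise_old G hWF i).sublist List.filter_sublist

omit hWF in
theorem mem_commons {i : Fin 2} {v : V} :
    v ∈ G.commons i ↔ v ∈ G.old i ∧ v ∈ G.new i := by
  simp [UFN.commons, List.mem_filter]

omit hWF in
theorem commons_subset_old {i : Fin 2} {v : V} (h : v ∈ G.commons i) : v ∈ G.old i :=
  ((mem_commons G).1 h).1

omit hWF in
theorem commons_subset_new {i : Fin 2} {v : V} (h : v ∈ G.commons i) : v ∈ G.new i :=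
  ((mem_commons G).1 h).2

theorem nodup_commons (i : Fin 2) : (G.commons i).Nodup :=
  ((hWF.1 i).1.2.2).sublist List.filter_sublist

theorem s_mem_new (i : Fin 2) : G.s ∈ G.new i :=
  List.mem_of_mem_head? (Option.mem_def.2 (hWF.1 i).2.1)

theorem s_mem_old (i : Fin 2) : G.s ∈ G.old i :=
  List.mem_of_mem_head? (Option.mem_def.2 (hWF.1 i).1.1)

theorem t_mem_old (i : Fin 2) : G.t ∈ G.old i :=
  List.mem_of_mem_getLast? (Option.mem_def.2 (hWF.1 i).1.2.1)

theorem t_mem_new (i : Fin 2) : G.t ∈ G.new i :=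
  List.mem_of_mem_getLast? (Option.mem_def.2 (hWF.1 i).2.2.1)

theorem head_commons (i : Fin 2) : (G.commons i).head? = some G.s := by
  have h1 : (G.old i).head? = some G.s := (hWF.1 i).1.1
  obtain ⟨O', hO⟩ : ∃ O', G.old i = G.s :: O' := by
    cases hO : G.old i with
    | nil => rw [hO] at h1; simp at h1
    | cons a O' => rw [hO] at h1; simp at h1; exact ⟨O', by rw [h1]⟩
  unfold UFN.commons
  rw [hO, List.filter_cons_of_pos (by simpa using s_mem_new G hWF i)]
  rfl

theorem commons_ne_nil (i : Fin 2) : G.commons i ≠ [] := by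
  intro h
  have := head_commons G hWF i
  rw [h] at this; simp at this

theorem t_mem_commons (i : Fin 2) : G.t ∈ G.commons i :=
  (mem_commons G).2 ⟨t_mem_old G hWF i, t_mem_new G hWF i⟩

theorem ord_lt_t {i : Fin 2} {v : V} (hv : v ∈ G.old i) (hne : v ≠ G.t) :
    ordF G hWF i v < ordF G hWF i G.t := by
  have hne' : G.old i ≠ [] := by
    intro h; exact absurd ((hWF.1 i).1.1) (by simp [h])
  have hlast : (G.old i).getLast hne' = G.t := by
    have := (hWF.1 i).1.2.1
    rw [List.getLast?_eq_getLast hne'] at this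
    exact Option.some.inj this
  have hdecomp := List.dropLast_append_getLast hne'
  rw [hlast] at hdecomp
  have hpw := pairwise_old G hWF i
  rw [← hdecomp] at hpw hv
  rcases List.mem_append.1 hv with h | h
  · exact (List.pairwise_append.1 hpw).2.2 v h _ (by simp)
  · simp at h; exact absurd h hne

theorem last_commons (i : Fin 2) : (G.commons i).getLast? = some G.t := by
  have hne := commons_ne_nil G hWF i
  rw [List.getLast?_eq_getLast hne]
  congr 1
  by_contra hx
  set x := (G.commons i).getLast hne with hxdef
  have hxC : x ∈ G.commons i := List.getLast_mem hne
  have hxO : x ∈ G.old i := commons_subset_old G hxC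
  have h1 : ordF G hWF i x < ordF G hWF i G.t := ord_lt_t G hWF hxO hx
  -- but t ∈ commons and x is the last element, so ord t < ord x
  have hdecomp := List.dropLast_append_getLast hne
  have hpw := pairwise_commons G hWF i
  have htC := t_mem_commons G hWF i
  rw [← hdecomp] at hpw htC
  rcases List.mem_append.1 htC with h | h
  · have := (List.pairwise_append.1 hpw).2.2 _ h x (by simp [hxdef])
    omega
  · simp at h; exact absurd h.symm hx

omit hWF in
/-- Decomposition of a pairwise-ordered list around two of its members. -/
theorem aux_decomp {P : List V} {ord : V → ℕ}
    (hpw : List.Pairwise (fun u v => ord u < ord v) P) {a z : V}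
    (ha : a ∈ P) (hz : z ∈ P) (haz : ord a < ord z) :
    ∃ P₁ I P₂, P = P₁ ++ a :: (I ++ z :: P₂) ∧ a ∉ P₁ ∧ z ∉ a :: I ∧
      segment P a z = a :: (I ++ [z]) ∧
      (∀ v ∈ I, ord a < ord v ∧ ord v < ord z) ∧
      (∀ v ∈ P₁, ord v < ord a) ∧ (∀ v ∈ P₂, ord z < ord v) := by
  obtain ⟨P₁, P₂', hP, haP₁⟩ := aux_split_first ha
  have hpw' := hpw; rw [hP] at hpw'
  have hP₁a : ∀ v ∈ P₁, ord v < ord a := fun v hv =>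
    (List.pairwise_append.1 hpw').2.2 v hv a (by simp)
  have hzP₂' : z ∈ P₂' := by
    rw [hP] at hz
    rcases List.mem_append.1 hz with h | h
    · exact absurd (hP₁a z h) (by omega)
    · rcases List.mem_cons.1 h with h | h
      · subst h; omega
      · exact h
  obtain ⟨I, P₂, hP2, hzI⟩ := aux_split_first hzP₂'
  subst hP2
  refine ⟨P₁, I, P₂, by rw [hP], haP₁, ?_, ?_, ?_, hP₁a, ?_⟩
  · intro hmem
    rcases List.mem_cons.1 hmem with h | h
    · subst h; omega
    · exact hzI h
  · rw [hP]
    exact aux_segment_eq haP₁ (by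
      intro hmem
      rcases List.mem_cons.1 hmem with h | h
      · subst h; omega
      · exact hzI h)
  · have hpwT : List.Pairwise (fun u v => ord u < ord v) (a :: (I ++ z :: P₂)) :=
      (List.pairwise_append.1 hpw').2.1
    intro v hv
    constructor
    · exact (List.pairwise_cons.1 hpwT).1 v (List.mem_append.2 (Or.inl hv))
    · exact (List.pairwise_append.1 (List.pairwise_cons.1 hpwT).2).2.2 v hv z (by simp)
  · have hpwT : List.Pairwise (fun u v => ord u < ord v) (a :: (I ++ z :: P₂)) :=
      (List.pairwise_append.1 hpw').2.1
    intro v hv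
    exact (List.pairwise_cons.1
      (List.pairwise_append.1 (List.pairwise_cons.1 hpwT).2).2.1).1 v hv

end Aux3
section Aux4
set_option linter.unusedSectionVars false
open List UFN

variable (G : UFN V 2) (hWF : G.WellFormed)
include hWF

theorem block_ord {i : Fin 2} {a z : V} (hb : (a, z) ∈ edgesOf (G.commons i)) :
    ordF G hWF i a < ordF G hWF i z := by
  rcases aux_mem_edgesOf_iff.1 hb with ⟨l1, l2, hC⟩
  have hpw := pairwise_commons G hWF i
  rw [hC] at hpw
  exact (List.pairwise_cons.1 (List.pairwise_append.1 hpw).2.1).1 z (by simp)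

theorem no_common_between {i : Fin 2} {a z : V} (hb : (a, z) ∈ edgesOf (G.commons i))
    {v : V} (hv : v ∈ G.commons i) :
    ¬ (ordF G hWF i a < ordF G hWF i v ∧ ordF G hWF i v < ordF G hWF i z) := by
  rintro ⟨h1, h2⟩
  rcases aux_mem_edgesOf_iff.1 hb with ⟨l1, l2, hC⟩
  have hpw := pairwise_commons G hWF i
  rw [hC] at hpw hv
  rcases List.mem_append.1 hv with h | h
  · have := (List.pairwise_append.1 hpw).2.2 v h a (by simp)
    omega
  · rcases List.mem_cons.1 h with h | h
    · subst h; omega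
    · rcases List.mem_cons.1 h with h | h
      · subst h; omega
      · have hpw2 := (List.pairwise_append.1 hpw).2.1
        have := (List.pairwise_cons.1 (List.pairwise_cons.1 hpw2).2).1 v h
        omega

/-- The interior of the old-path segment of a block. -/
def oldInt (i : Fin 2) (a z : V) : List V := (segment (G.old i) a z).tail.dropLast

/-- The interior of the new-path segment of a block. -/
def newInt (i : Fin 2) (a z : V) : List V := (segment (G.new i) a z).tail.dropLast

theorem oldSeg_spec {i : Fin 2} {a z : V} (hb : (a, z) ∈ edgesOf (G.commons i)) :
    segment (G.old i) a z = a :: (oldInt G i a z ++ [z]) ∧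
    (∀ v ∈ oldInt G i a z, v ∈ G.old i ∧ v ∉ G.new i ∧
      ordF G hWF i a < ordF G hWF i v ∧ ordF G hWF i v < ordF G hWF i z) ∧
    segment (G.old i) a z <:+: G.old i := by
  have haC := aux_fst_mem hb
  have hzC := aux_snd_mem hb
  obtain ⟨P₁, I, P₂, hP, _, _, hseg, hords, _, _⟩ :=
    aux_decomp (pairwise_old G hWF i) (commons_subset_old G haC)
      (commons_subset_old G hzC) (block_ord G hWF hb)
  have hint : oldInt G i a z = I := by
    unfold oldInt
    rw [hseg]
    simp [List.dropLast_concat]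
  refine ⟨by rw [hseg, hint], ?_, ?_⟩
  · intro v hv
    rw [hint] at hv
    have hvO : v ∈ G.old i := by rw [hP]; simp [hv]
    refine ⟨hvO, ?_, (hords v hv).1, (hords v hv).2⟩
    intro hvN
    exact no_common_between G hWF hb ((mem_commons G).2 ⟨hvO, hvN⟩) (hords v hv)
  · rw [hseg, hP]
    exact ⟨P₁, P₂, by simp⟩

theorem newSeg_spec {i : Fin 2} {a z : V} (hb : (a, z) ∈ edgesOf (G.commons i)) :
    segment (G.new i) a z = a :: (newInt G i a z ++ [z]) ∧
    (∀ v ∈ newInt G i a z, v ∈ G.new i ∧ v ∉ G.old i ∧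
      ordF G hWF i a < ordF G hWF i v ∧ ordF G hWF i v < ordF G hWF i z) ∧
    segment (G.new i) a z <:+: G.new i := by
  have haC := aux_fst_mem hb
  have hzC := aux_snd_mem hb
  obtain ⟨P₁, I, P₂, hP, _, _, hseg, hords, _, _⟩ :=
    aux_decomp (pairwise_new G hWF i) (commons_subset_new G haC)
      (commons_subset_new G hzC) (block_ord G hWF hb)
  have hint : newInt G i a z = I := by
    unfold newInt
    rw [hseg]
    simp [List.dropLast_concat]
  refine ⟨by rw [hseg, hint], ?_, ?_⟩
  · intro v hv
    rw [hint] at hv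
    have hvN : v ∈ G.new i := by rw [hP]; simp [hv]
    refine ⟨hvN, ?_, (hords v hv).1, (hords v hv).2⟩
    intro hvO
    exact no_common_between G hWF hb ((mem_commons G).2 ⟨hvO, hvN⟩) (hords v hv)
  · rw [hseg, hP]
    exact ⟨P₁, P₂, by simp⟩

theorem block_unique {i : Fin 2} {a z a' z' v : V}
    (hb : (a, z) ∈ edgesOf (G.commons i)) (hb' : (a', z') ∈ edgesOf (G.commons i))
    (h1 : ordF G hWF i a < ordF G hWF i v ∧ ordF G hWF i v < ordF G hWF i z)
    (h2 : ordF G hWF i a' < ordF G hWF i v ∧ ordF G hWF i v < ordF G hWF i z') :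
    a = a' ∧ z = z' := by
  by_cases ha : a = a'
  · exact ⟨ha, by subst ha; exact aux_succ_unique (nodup_commons G hWF i) hb hb'⟩
  · exfalso
    rcases aux_pairwise_tricho (pairwise_commons G hWF i) (aux_fst_mem hb)
      (aux_fst_mem hb') ha with h | h
    · exact no_common_between G hWF hb (aux_fst_mem hb') ⟨h, by omega⟩
    · exact no_common_between G hWF hb' (aux_fst_mem hb) ⟨h, by omega⟩

end Aux4

section Sched
set_option linter.unusedSectionVars false
open List UFN

variable (G : UFN V 2)

open Classical in
/-- The greedy schedule. -/
noncomputable def sched (u : V × Fin 2) : ℕ :=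
  if h1 : ∃ zz, (u.1, zz) ∈ edgesOf (G.commons u.2) then
    3 * rho G (u.2, u.1, h1.choose) + 2
  else if h2 : ∃ b : V × V, b ∈ edgesOf (G.commons u.2) ∧
      u.1 ∈ newInt G u.2 b.1 b.2 then
    3 * rho G (u.2, h2.choose) + 1
  else if h3 : ∃ b : V × V, b ∈ edgesOf (G.commons u.2) ∧
      u.1 ∈ oldInt G u.2 b.1 b.2 then
    3 * rho G (u.2, h3.choose) + 3
  else 0

variable (hWF : G.WellFormed)
include hWF

theorem sched_start {i : Fin 2} {a z : V} (hb : (a, z) ∈ edgesOf (G.commons i)) :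
    sched G (a, i) = 3 * rho G (i, a, z) + 2 := by
  have h1 : ∃ zz, ((a, i).1, zz) ∈ edgesOf (G.commons (a, i).2) := ⟨z, hb⟩
  rw [sched, dif_pos h1]
  have : h1.choose = z := aux_succ_unique (nodup_commons G hWF i) h1.choose_spec hb
  rw [this]

theorem sched_newInt {i : Fin 2} {a z v : V} (hb : (a, z) ∈ edgesOf (G.commons i))
    (hv : v ∈ newInt G i a z) :
    sched G (v, i) = 3 * rho G (i, a, z) + 1 := by
  have hvspec := (newSeg_spec G hWF hb).2.1 v hv
  have h1 : ¬ ∃ zz, ((v, i).1, zz) ∈ edgesOf (G.commons (v, i).2) := by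
    rintro ⟨zz, hzz⟩
    exact hvspec.2.1 (commons_subset_old G (aux_fst_mem hzz))
  have h2 : ∃ b : V × V, b ∈ edgesOf (G.commons i) ∧ v ∈ newInt G i b.1 b.2 :=
    ⟨(a, z), hb, hv⟩
  rw [sched, dif_neg h1, dif_pos h2]
  have hcs := h2.choose_spec
  have hvspec' := (newSeg_spec G hWF hcs.1).2.1 v hcs.2
  obtain ⟨he1, he2⟩ := block_unique G hWF hcs.1 hb ⟨hvspec'.2.2.1, hvspec'.2.2.2⟩
    ⟨hvspec.2.2.1, hvspec.2.2.2⟩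
  have : h2.choose = (a, z) := Prod.ext he1 he2
  rw [this]

theorem sched_oldInt {i : Fin 2} {a z v : V} (hb : (a, z) ∈ edgesOf (G.commons i))
    (hv : v ∈ oldInt G i a z) :
    sched G (v, i) = 3 * rho G (i, a, z) + 3 := by
  have hvspec := (oldSeg_spec G hWF hb).2.1 v hv
  have h1 : ¬ ∃ zz, ((v, i).1, zz) ∈ edgesOf (G.commons (v, i).2) := by
    rintro ⟨zz, hzz⟩
    exact hvspec.2.1 (commons_subset_new G (aux_fst_mem hzz))
  have h2 : ¬ ∃ b : V × V, b ∈ edgesOf (G.commons i) ∧ v ∈ newInt G i b.1 b.2 := by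
    rintro ⟨b, hbm, hvb⟩
    exact ((newSeg_spec G hWF hbm).2.1 v hvb).2.1 hvspec.1
  have h3 : ∃ b : V × V, b ∈ edgesOf (G.commons i) ∧ v ∈ oldInt G i b.1 b.2 :=
    ⟨(a, z), hb, hv⟩
  rw [sched, dif_neg h1, dif_neg h2, dif_pos h3]
  have hcs := h3.choose_spec
  have hvspec' := (oldSeg_spec G hWF hcs.1).2.1 v hcs.2
  obtain ⟨he1, he2⟩ := block_unique G hWF hcs.1 hb ⟨hvspec'.2.2.1, hvspec'.2.2.2⟩
    ⟨hvspec.2.2.1, hvspec.2.2.2⟩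
  have : h3.choose = (a, z) := Prod.ext he1 he2
  rw [this]

variable {r : ℕ} {S : Set (V × Fin 2)}

theorem flip_up (hS : ∀ u ∈ S, sched G u = r) {i : Fin 2} {a z v : V}
    (hb : (a, z) ∈ edgesOf (G.commons i))
    (ha : (a, i) ∈ {u | sched G u < r} ∪ S) (hv : v ∈ newInt G i a z) :
    (v, i) ∈ {u | sched G u < r} ∪ S := by
  left
  have h1 := sched_start G hWF hb
  have h2 := sched_newInt G hWF hb hv
  have : sched G (a, i) ≤ r := by
    rcases ha with h | h
    · exact Nat.le_of_lt h
    · exact Nat.le_of_eq (hS _ h)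
  simp only [Set.mem_setOf_eq]
  omega

theorem unflip_down (hS : ∀ u ∈ S, sched G u = r) {i : Fin 2} {a z v : V}
    (hb : (a, z) ∈ edgesOf (G.commons i))
    (ha : (a, i) ∉ {u | sched G u < r} ∪ S) (hv : v ∈ oldInt G i a z) :
    (v, i) ∉ {u | sched G u < r} ∪ S := by
  intro hvU
  have h1 := sched_start G hWF hb
  have h2 := sched_oldInt G hWF hb hv
  apply ha
  left
  simp only [Set.mem_setOf_eq]
  rcases hvU with h | h
  · simp only [Set.mem_setOf_eq] at h; omega
  · have := hS _ h; omega

end Sched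
section Build
set_option linter.unusedSectionVars false
open List UFN

theorem aux_edge_fst_mem_dropLast {m : List V} {e : V × V} (h : e ∈ edgesOf m) :
    e.1 ∈ m.dropLast := by
  induction m with
  | nil => simp [edgesOf] at h
  | cons a q ih =>
    cases q with
    | nil => simp [edgesOf] at h
    | cons b l =>
      rw [aux_edgesOf_cons_cons] at h
      rcases List.mem_cons.1 h with h | h
      · subst h; simp
      · have := ih h
        simp only [List.dropLast_cons₂]
        exact List.mem_cons.2 (Or.inr this)

/-- One step of the concatenation argument. -/
theorem aux_step {E : V × V → Prop} {ord : V → ℕ} {c c' : V} {Int B' : List V}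
    (hordcc' : ord c < ord c')
    (hintord : ∀ v ∈ Int, ord c < ord v ∧ ord v < ord c')
    (hpwseg : List.Pairwise (fun u v => ord u < ord v) (c :: (Int ++ [c'])))
    (hact : ∀ e ∈ edgesOf (c :: (Int ++ [c'])), E e)
    (hheadB : B'.head? = some c')
    (hordch : List.Chain' (fun u v => ord u < ord v) B')
    (hactch : List.Chain' (fun u v => E (u, v)) B') :
    ((c :: (Int ++ [c'])).dropLast ++ B').head? = some c ∧
    ((c :: (Int ++ [c'])).dropLast ++ B').getLast? = B'.getLast? ∧
    List.Chain' (fun u v => ord u < ord v) ((c :: (Int ++ [c'])).dropLast ++ B') ∧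
    List.Chain' (fun u v => E (u, v)) ((c :: (Int ++ [c'])).dropLast ++ B') ∧
    (∀ e ∈ edgesOf ((c :: (Int ++ [c'])).dropLast ++ B'),
      e ∈ edgesOf (c :: (Int ++ [c'])) ∨ e ∈ edgesOf B') := by
  have hBne : B' ≠ [] := by intro h; rw [h] at hheadB; simp at hheadB
  obtain ⟨b0, rest', rfl⟩ : ∃ b0 rest', B' = b0 :: rest' := by
    cases B' with
    | nil => simp at hheadB
    | cons x y => exact ⟨x, y, rfl⟩
  obtain rfl : c' = b0 := by symm; simpa using hheadB
  have hdrop : (c :: (Int ++ [c'])).dropLast = c :: Int := by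
    have : c :: (Int ++ [c']) = (c :: Int) ++ [c'] := by simp
    rw [this, List.dropLast_concat]
  have hKne : (c :: Int : List V) ≠ [] := by simp
  have hsegK : c :: (Int ++ [c']) = (c :: Int) ++ [c'] := by simp
  have hKsub : (c :: Int) <+ c :: (Int ++ [c']) := by
    rw [hsegK]; exact List.sublist_append_left _ _
  have hlastK : ∀ x, (c :: Int).getLast hKne = x → ord x < ord c' := by
    intro x hx
    have hxK : x ∈ c :: Int := hx ▸ List.getLast_mem hKne
    rcases List.mem_cons.1 hxK with h | h
    · subst h; exact hordcc'
    · exact (hintord x h).2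
  have hKpre : (c :: Int) <+: c :: (Int ++ [c']) := ⟨[c'], by simp⟩
  have hjoin_edge : ((c :: Int).getLast hKne, c') ∈ edgesOf (c :: (Int ++ [c'])) := by
    rw [hsegK]
    have hK : (c :: Int) = (c :: Int).dropLast ++ [(c :: Int).getLast hKne] :=
      (List.dropLast_append_getLast hKne).symm
    refine aux_mem_edgesOf_iff.2 ⟨(c :: Int).dropLast, [], ?_⟩
    conv_lhs => rw [hK]
    simp
  refine ⟨?_, ?_, ?_, ?_, ?_⟩
  · rw [hdrop]; simp
  · rw [hdrop]; exact List.getLast?_append_of_ne_nil _ hBne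
  · rw [hdrop]
    refine List.isChain_append.2 ⟨(hpwseg.sublist hKsub).isChain, hordch, ?_⟩
    intro x hx y hy
    rw [List.getLast?_eq_getLast hKne] at hx
    simp at hx hy
    subst hy
    exact hlastK x hx
  · rw [hdrop]
    refine List.isChain_append.2 ⟨?_, hactch, ?_⟩
    · refine ((aux_chain'_edges (c :: Int)).imp fun u v h => ?_)
      exact hact _ (aux_edges_infix hKpre.isInfix h)
    · intro x hx y hy
      rw [List.getLast?_eq_getLast hKne] at hx
      simp at hx hy
      subst hy
      exact hact _ (hx ▸ hjoin_edge)
  · rw [hdrop]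
    intro e he
    rw [aux_edgesOf_append_cons, List.mem_append] at he
    rcases he with h | h
    · left; rw [hsegK]; exact h
    · right; exact h

variable (G : UFN V 2)

open Classical in
/-- The transient path of pair `i` after the updates `U`, built from the
common vertices. -/
noncomputable def build (U : Set (V × Fin 2)) (i : Fin 2) : List V → List V
  | [] => []
  | [c] => [c]
  | c :: c' :: rest =>
      (if (c, i) ∈ U then segment (G.new i) c c' else segment (G.old i) c c').dropLast
        ++ build U i (c' :: rest)

variable (hWF : G.WellFormed)
include hWF

theorem build_spec {r : ℕ} {S : Set (V × Fin 2)} (hS : ∀ u ∈ S, sched G u = r)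
    (i : Fin 2) :
    ∀ cs, cs ≠ [] → cs <:+ G.commons i →
    (build G ({u | sched G u < r} ∪ S) i cs).head? = cs.head? ∧
    (build G ({u | sched G u < r} ∪ S) i cs).getLast? = cs.getLast? ∧
    List.Chain' (fun u v => ordF G hWF i u < ordF G hWF i v)
      (build G ({u | sched G u < r} ∪ S) i cs) ∧
    List.Chain' (fun u v => G.active ({u | sched G u < r} ∪ S) i (u, v))
      (build G ({u | sched G u < r} ∪ S) i cs) ∧
    (∀ e ∈ edgesOf (build G ({u | sched G u < r} ∪ S) i cs),
      ∃ a z, (a, z) ∈ edgesOf (G.commons i) ∧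
        (((a, i) ∈ ({u | sched G u < r} ∪ S) ∧ e ∈ edgesOf (segment (G.new i) a z)) ∨
         ((a, i) ∉ ({u | sched G u < r} ∪ S) ∧ e ∈ edgesOf (segment (G.old i) a z)))) := by
  set U : Set (V × Fin 2) := {u | sched G u < r} ∪ S with hU
  intro cs
  induction cs with
  | nil => intro h; exact absurd rfl h
  | cons c cs' ih =>
    intro _ hsuf
    cases cs' with
    | nil =>
      refine ⟨by simp [build], by simp [build], by simp only [build]; exact List.isChain_singleton _,
        by simp only [build]; exact List.isChain_singleton _, ?_⟩
      intro e he
      simp [build, edgesOf] at he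
    | cons c' rest =>
      have hsuf' : (c' :: rest) <:+ G.commons i := by
        rcases hsuf with ⟨pre, hpre⟩
        exact ⟨pre ++ [c], by rw [← hpre]; simp⟩
      obtain ⟨hhead, hlast, hordch, hactch, hedge⟩ := ih (by simp) hsuf'
      have hb : (c, c') ∈ edgesOf (G.commons i) := by
        rcases hsuf with ⟨pre, hpre⟩
        exact aux_mem_edgesOf_iff.2 ⟨pre, rest, hpre.symm⟩
      have hordcc' := block_ord G hWF hb
      by_cases hflip : (c, i) ∈ U
      · -- flipped block: use the new segment
        obtain ⟨hseg, hint, hinfix⟩ := newSeg_spec G hWF hb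
        have hpwseg : List.Pairwise (fun u v => ordF G hWF i u < ordF G hWF i v)
            (c :: (newInt G i c c' ++ [c'])) := by
          rw [← hseg]
          exact (pairwise_new G hWF i).sublist hinfix.sublist
        have hact : ∀ e ∈ edgesOf (c :: (newInt G i c c' ++ [c'])),
            G.active U i e := by
          intro e he
          rw [← hseg] at he
          have heN : e ∈ edgesOf (G.new i) := aux_edges_infix hinfix he
          have hfst : e.1 ∈ c :: newInt G i c c' := by
            have := aux_edge_fst_mem_dropLast he
            rw [hseg] at this
            rwa [show (c :: (newInt G i c c' ++ [c'])).dropLast = c :: newInt G i c c' by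
              rw [show c :: (newInt G i c c' ++ [c']) = (c :: newInt G i c c') ++ [c'] by simp,
                List.dropLast_concat]] at this
          right
          refine ⟨heN, ?_⟩
          rcases List.mem_cons.1 hfst with h | h
          · rw [h]; exact hflip
          · exact flip_up G hWF hS hb hflip h
        have hbuild : build G U i (c :: c' :: rest)
            = (c :: (newInt G i c c' ++ [c'])).dropLast ++ build G U i (c' :: rest) := by
          rw [build, if_pos hflip, hseg]
        obtain ⟨H1, H2, H3, H4, H5⟩ := aux_step hordcc'
          (fun v hv => ⟨(hint v hv).2.2.1, (hint v hv).2.2.2⟩) hpwseg hact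
          (by rw [hhead]; rfl) hordch hactch
        rw [hbuild]
        refine ⟨by rw [H1]; simp, by rw [H2, hlast]; simp [List.getLast?_cons_cons], H3, H4, ?_⟩
        intro e he
        rcases H5 e he with h | h
        · exact ⟨c, c', hb, Or.inl ⟨hflip, by rw [hseg]; exact h⟩⟩
        · exact hedge e h
      · -- unflipped block: use the old segment
        obtain ⟨hseg, hint, hinfix⟩ := oldSeg_spec G hWF hb
        have hpwseg : List.Pairwise (fun u v => ordF G hWF i u < ordF G hWF i v)
            (c :: (oldInt G i c c' ++ [c'])) := by
          rw [← hseg]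
          exact (pairwise_old G hWF i).sublist hinfix.sublist
        have hact : ∀ e ∈ edgesOf (c :: (oldInt G i c c' ++ [c'])),
            G.active U i e := by
          intro e he
          rw [← hseg] at he
          have heO : e ∈ edgesOf (G.old i) := aux_edges_infix hinfix he
          have hfst : e.1 ∈ c :: oldInt G i c c' := by
            have := aux_edge_fst_mem_dropLast he
            rw [hseg] at this
            rwa [show (c :: (oldInt G i c c' ++ [c'])).dropLast = c :: oldInt G i c c' by
              rw [show c :: (oldInt G i c c' ++ [c']) = (c :: oldInt G i c c') ++ [c'] by simp,
                List.dropLast_concat]] at this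
          left
          refine ⟨heO, ?_⟩
          rcases List.mem_cons.1 hfst with h | h
          · rw [h]; exact hflip
          · exact unflip_down G hWF hS hb hflip h
        have hbuild : build G U i (c :: c' :: rest)
            = (c :: (oldInt G i c c' ++ [c'])).dropLast ++ build G U i (c' :: rest) := by
          rw [build, if_neg hflip, hseg]
        obtain ⟨H1, H2, H3, H4, H5⟩ := aux_step hordcc'
          (fun v hv => ⟨(hint v hv).2.2.1, (hint v hv).2.2.2⟩) hpwseg hact
          (by rw [hhead]; rfl) hordch hactch
        rw [hbuild]
        refine ⟨by rw [H1]; simp, by rw [H2, hlast]; simp [List.getLast?_cons_cons], H3, H4, ?_⟩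
        intro e he
        rcases H5 e he with h | h
        · exact ⟨c, c', hb, Or.inr ⟨hflip, by rw [hseg]; exact h⟩⟩
        · exact hedge e h

end Build
section Final
set_option linter.unusedSectionVars false
open List UFN

variable (G : UFN V 2) (hWF : G.WellFormed)
include hWF

theorem demand_le_old {i : Fin 2} {u v : V} (h : (u, v) ∈ edgesOf (G.old i)) :
    G.demand i ≤ G.cap u v := by
  have hcap := hWF.2.2.2.1 u v
  rw [Fin.sum_univ_two] at hcap
  fin_cases i <;> simp_all <;> omega

theorem demand_le_new {i : Fin 2} {u v : V} (h : (u, v) ∈ edgesOf (G.new i)) :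
    G.demand i ≤ G.cap u v := by
  have hcap := hWF.2.2.2.2 u v
  rw [Fin.sum_univ_two] at hcap
  fin_cases i <;> simp_all <;> omega

theorem active_functional (U : Set (V × Fin 2)) (i : Fin 2) :
    ∀ u v w : V, G.active U i (u, v) → G.active U i (u, w) → v = w := by
  intro u v w h1 h2
  rcases h1 with ⟨h1e, h1u⟩ | ⟨h1e, h1u⟩ <;> rcases h2 with ⟨h2e, h2u⟩ | ⟨h2e, h2u⟩
  · exact aux_succ_unique (hWF.1 i).1.2.2 h1e h2e
  · exact absurd h2u h1u
  · exact absurd h1u h2u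
  · exact aux_succ_unique (hWF.1 i).2.2.2 h1e h2e

variable (hacyc : ¬ G.HasDepCycle)
include hacyc

theorem mixed_contra {r : ℕ} {S : Set (V × Fin 2)} (hS : ∀ u ∈ S, sched G u = r)
    {i j : Fin 2} (hij : i ≠ j) {a z a' z' u v : V}
    (hbi : (a, z) ∈ edgesOf (G.commons i)) (hbj : (a', z') ∈ edgesOf (G.commons j))
    (hflip : (a, i) ∈ {u | sched G u < r} ∪ S)
    (hunflip : (a', j) ∉ {u | sched G u < r} ∪ S)
    (hei : (u, v) ∈ edgesOf (segment (G.new i) a z))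
    (hej : (u, v) ∈ edgesOf (segment (G.old j) a' z'))
    (hcap : G.cap u v < G.demand i + G.demand j) : False := by
  have hdep : G.Dep (i, a, z) (j, a', z') :=
    ⟨hbi, hbj, by simpa using hij, ⟨(u, v), hei, hej, hcap⟩⟩
  have hrho := rho_lt G hacyc hdep
  have h1 := sched_start G hWF hbi
  have h2 := sched_start G hWF hbj
  apply hunflip
  left
  simp only [Set.mem_setOf_eq]
  have : sched G (a, i) ≤ r := by
    rcases hflip with h | h
    · exact Nat.le_of_lt h
    · exact Nat.le_of_eq (hS _ h)
  omega

theorem transient_family {r : ℕ} {S : Set (V × Fin 2)} (hS : ∀ u ∈ S, sched G u = r) :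
    G.TransientFamily ({u | sched G u < r} ∪ S) := by
  set U : Set (V × Fin 2) := {u | sched G u < r} ∪ S with hUdef
  have hspec := fun i => build_spec G hWF hS i (G.commons i)
    (commons_ne_nil G hWF i) (List.suffix_refl _)
  refine ⟨fun i => build G U i (G.commons i), fun i => ?_, ?_⟩
  · obtain ⟨hhead, hlast, hordch, hactch, hedge⟩ := hspec i
    have hpath : IsPathIn (G.active U i) G.s G.t (build G U i (G.commons i)) := by
      refine ⟨?_, ?_, hactch, ?_⟩
      · rw [hhead]; exact head_commons G hWF i
      · rw [hlast]; exact last_commons G hWF i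
      · exact aux_nodup_of_pairwise_ord (aux_chain'_ord_pairwise hordch)
    have hvalid : G.ValidPath i (build G U i (G.commons i)) := by
      intro e he
      obtain ⟨a, z, hb, hcase⟩ := hedge e he
      obtain ⟨u', v'⟩ := e
      rcases hcase with ⟨_, hseg⟩ | ⟨_, hseg⟩
      · exact demand_le_new G hWF (aux_edges_infix (newSeg_spec G hWF hb).2.2 hseg)
      · exact demand_le_old G hWF (aux_edges_infix (oldSeg_spec G hWF hb).2.2 hseg)
    refine ⟨hpath, hvalid, ?_⟩
    intro p hp hpv
    exact aux_path_unique (active_functional G hWF U i) p _ G.s G.t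
      hp.1 hpath.1 hp.2.2.1 hpath.2.2.1 hp.2.1 hpath.2.1 hp.2.2.2 hpath.2.2.2
  · intro u v
    rw [Fin.sum_univ_two]
    obtain ⟨_, _, _, _, hedge0⟩ := hspec 0
    obtain ⟨_, _, _, _, hedge1⟩ := hspec 1
    by_cases m0 : (u, v) ∈ edgesOf (build G U 0 (G.commons 0)) <;>
      by_cases m1 : (u, v) ∈ edgesOf (build G U 1 (G.commons 1))
    · rw [if_pos m0, if_pos m1]
      obtain ⟨a0, z0, hb0, hc0⟩ := hedge0 (u, v) m0
      obtain ⟨a1, z1, hb1, hc1⟩ := hedge1 (u, v) m1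
      by_cases hc : G.demand 0 + G.demand 1 ≤ G.cap u v
      · exact hc
      · exfalso
        have hlt : G.cap u v < G.demand 0 + G.demand 1 := by omega
        rcases hc0 with ⟨hf0, he0⟩ | ⟨hf0, he0⟩ <;> rcases hc1 with ⟨hf1, he1⟩ | ⟨hf1, he1⟩
        · -- both new
          have hn0 : (u, v) ∈ edgesOf (G.new 0) :=
            aux_edges_infix (newSeg_spec G hWF hb0).2.2 he0
          have hn1 : (u, v) ∈ edgesOf (G.new 1) :=
            aux_edges_infix (newSeg_spec G hWF hb1).2.2 he1
          have hcap := hWF.2.2.2.2 u v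
          rw [Fin.sum_univ_two, if_pos hn0, if_pos hn1] at hcap
          omega
        · -- 0 new flipped, 1 old unflipped
          exact mixed_contra G hWF hacyc hS (by decide) hb0 hb1 hf0 hf1 he0 he1 hlt
        · -- 1 new flipped, 0 old unflipped
          exact mixed_contra G hWF hacyc hS (by decide) hb1 hb0 hf1 hf0 he1 he0
            (by omega)
        · -- both old
          have hn0 : (u, v) ∈ edgesOf (G.old 0) :=
            aux_edges_infix (oldSeg_spec G hWF hb0).2.2 he0
          have hn1 : (u, v) ∈ edgesOf (G.old 1) :=
            aux_edges_infix (oldSeg_spec G hWF hb1).2.2 he1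
          have hcap := hWF.2.2.2.1 u v
          rw [Fin.sum_univ_two, if_pos hn0, if_pos hn1] at hcap
          omega
    · rw [if_pos m0, if_neg m1]
      obtain ⟨a0, z0, hb0, hc0⟩ := hedge0 (u, v) m0
      rcases hc0 with ⟨_, he0⟩ | ⟨_, he0⟩
      · have := demand_le_new G hWF (aux_edges_infix (newSeg_spec G hWF hb0).2.2 he0)
        omega
      · have := demand_le_old G hWF (aux_edges_infix (oldSeg_spec G hWF hb0).2.2 he0)
        omega
    · rw [if_neg m0, if_pos m1]
      obtain ⟨a1, z1, hb1, hc1⟩ := hedge1 (u, v) m1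
      rcases hc1 with ⟨_, he1⟩ | ⟨_, he1⟩
      · have := demand_le_new G hWF (aux_edges_infix (newSeg_spec G hWF hb1).2.2 he1)
        omega
      · have := demand_le_old G hWF (aux_edges_infix (oldSeg_spec G hWF hb1).2.2 he1)
        omega
    · rw [if_neg m0, if_neg m1]; omega

end Final

end FlowUpdate

open FlowUpdate in
/-- If the dependency graph is acyclic, the greedy schedule that
repeatedly updates all blocks corresponding to current sinks of the dependency
graph (each block over three consecutive rounds: preparation, start-vertex
update, cleanup) terminates and yields a feasible update sequence. -/
theorem stmt6 {V : Type} [DecidableEq V] (G : UFN V 2)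
    (hWF : G.WellFormed) (hacyc : ¬ G.HasDepCycle) :
    ∃ R : V × Fin 2 → ℕ, G.Feasible R ∧ G.BlockPattern R ∧
      ∀ b1 b2 : UFN.Blk V 2, G.Dep b1 b2 → R (b2.2.1, b2.1) < R (b1.2.1, b1.1) := by
  refine ⟨sched G, ?_, ?_, ?_⟩
  · intro r S hS
    exact transient_family G hWF hacyc hS
  · rintro ⟨i, a, z⟩ hb
    have hb' : (a, z) ∈ edgesOf (G.commons i) := hb
    refine ⟨3 * rho G (i, a, z) + 1, ?_, ?_, ?_⟩
    · intro v hv hva hvz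
      have hv' : v ∈ segment (G.new i) a z := hv
      rw [(newSeg_spec G hWF hb').1] at hv'
      rcases List.mem_cons.1 hv' with h | h
      · exact absurd h hva
      rcases List.mem_append.1 h with h | h
      · exact sched_newInt G hWF hb' h
      · simp only [List.mem_singleton] at h
        exact absurd h hvz
    · have := sched_start G hWF hb'
      simpa using this
    · intro v hv hvN
      have hv' : v ∈ segment (G.old i) a z := hv
      rw [(oldSeg_spec G hWF hb').1] at hv'
      rcases List.mem_cons.1 hv' with h | h
      · subst h
        exact absurd (commons_subset_new G (aux_fst_mem hb')) hvN
      rcases List.mem_append.1 h with h | h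
      · have := sched_oldInt G hWF hb' h
        simpa using this
      · simp only [List.mem_singleton] at h
        subst h
        exact absurd (commons_subset_new G (aux_snd_mem hb')) hvN
  · rintro ⟨i1, b1⟩ ⟨i2, b2⟩ hdep
    obtain ⟨a1, z1⟩ := b1
    obtain ⟨a2, z2⟩ := b2
    have h1 := sched_start G hWF (hdep.1 : (a1, z1) ∈ edgesOf (G.commons i1))
    have h2 := sched_start G hWF (hdep.2.1 : (a2, z2) ∈ edgesOf (G.commons i2))
    have h3 := rho_lt G hacyc hdep
    simp only at h1 h2 ⊢
    omega
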